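/- Let φ = {i_1 < i_2 < ... < i_{r+1}} ⊆ {1,...,m}, let V be an r-dimensional subspace of R^m with dim π_φ(V) = r, and let x ∈ R^m. Then π_φ(x) ∈ π_φ(V) if and only if Σ_{k=1}^{r+1} (-1)^{k-1} x_{i_k} [φ \ {i_k}]_V = 0, where [φ \ {i_k}]_V denotes the Plücker coordinate of V indexed by the r-element set φ \ {i_k} (computed with respect to a fixed basis of V). -/

import Mathlib

open Matrix Finset

/-- Coordinate projection onto the coordinates indexed by `ψ`. -/
noncomputable def proj {m : ℕ} (ψ : Finset (Fin m)) :
    ((Fin m) → ℝ) →ₗ[ℝ] ({i // i ∈ ψ} → ℝ) :=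
  LinearMap.funLeft ℝ ℝ Subtype.val

/-- `B` is a basis matrix of `V`: its columns are linearly independent and span `V`. -/
def IsBasisMatrixOf {m r : ℕ} (B : Matrix (Fin m) (Fin r) ℝ)
    (V : Submodule ℝ (Fin m → ℝ)) : Prop :=
  LinearIndependent ℝ (fun j : Fin r => fun i : Fin m => B i j) ∧
    Submodule.span ℝ (Set.range (fun j : Fin r => fun i : Fin m => B i j)) = V

/-- Plücker coordinate: the `k×k` minor of `B` with rows indexed by `ψ`. -/
noncomputable def pluck {m k : ℕ} (B : Matrix (Fin m) (Fin k) ℝ)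
    (ψ : Finset (Fin m)) (h : ψ.card = k) : ℝ :=
  (B.submatrix (fun i : Fin k => ((ψ.orderIsoOfFin h i : Fin m))) id).det


theorem stmt3 {m r : ℕ} (V : Submodule ℝ (Fin m → ℝ))
    (hV : Module.finrank ℝ V = r)
    (B : Matrix (Fin m) (Fin r) ℝ) (hB : IsBasisMatrixOf B V)
    (φ : Finset (Fin m)) (hφ : φ.card = r + 1)
    (hφV : Module.finrank ℝ (V.map (proj φ)) = r)
    (x : Fin m → ℝ) :
    proj φ x ∈ V.map (proj φ) ↔
      ∑ k : Fin (r + 1), (-1 : ℝ) ^ (k : ℕ) * x ((φ.orderIsoOfFin hφ k : Fin m)) *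
        pluck B (φ.erase ((φ.orderIsoOfFin hφ k : Fin m)))
          (by simp [Finset.card_erase_of_mem (Finset.coe_mem _), hφ]) = 0 := by
  classical
  set e : Fin (r + 1) → Fin m := fun k => (φ.orderIsoOfFin hφ k : Fin m) with he
  have he_strict : StrictMono e :=
    fun a b hab => (φ.orderIsoOfFin hφ).strictMono hab
  have he_mem : ∀ k, e k ∈ φ := fun k => (φ.orderIsoOfFin hφ k).2
  -- the reindexing equivalence
  set g : ({i // i ∈ φ} → ℝ) ≃ₗ[ℝ] (Fin (r + 1) → ℝ) :=
    LinearEquiv.funCongrLeft ℝ ℝ (φ.orderIsoOfFin hφ).toEquiv with hg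
  set p : (Fin m → ℝ) →ₗ[ℝ] (Fin (r + 1) → ℝ) := g.toLinearMap ∘ₗ proj φ with hp
  have hp_apply : ∀ (y : Fin m → ℝ) (k : Fin (r + 1)), p y k = y (e k) := fun y k => rfl
  have hmap : V.map p = (V.map (proj φ)).map g.toLinearMap := by
    rw [hp, Submodule.map_comp]
  -- membership transfer
  have hmem : proj φ x ∈ V.map (proj φ) ↔ p x ∈ V.map p := by
    rw [hmap]
    constructor
    · intro h
      exact ⟨proj φ x, h, rfl⟩
    · intro h
      rcases h with ⟨y, hy, hxy⟩
      have : y = proj φ x := g.injective hxy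
      rwa [this] at hy
  -- the columns of B projected
  set v : Fin r → (Fin (r + 1) → ℝ) := fun j => p (fun i => B i j) with hv
  have hspan : V.map p = Submodule.span ℝ (Set.range v) := by
    rw [← hB.2, Submodule.map_span, ← Set.range_comp]
    rfl
  have hfr : Module.finrank ℝ (V.map p) = r := by
    rw [hmap, LinearEquiv.finrank_map_eq, hφV]
  have hvind : LinearIndependent ℝ v := by
    rw [linearIndependent_iff_card_eq_finrank_span]
    rw [Set.finrank, ← hspan, hfr, Fintype.card_fin]
  -- the big matrix
  set A : Matrix (Fin (r + 1)) (Fin (r + 1)) ℝ :=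
    fun i => Fin.snoc (fun j => B (e i) j) (x (e i)) with hA
  have hAcol : (fun j => Aᵀ j) = Fin.snoc v (p x) := by
    funext j
    refine Fin.lastCases ?_ (fun j => ?_) j
    · funext i
      rw [transpose_apply]
      simp [hA, transpose_apply, Fin.snoc_last, hp_apply]
    · funext i
      rw [transpose_apply]
      simp [hA, transpose_apply, Fin.snoc_castSucc, hv, hp_apply]
  -- membership iff det = 0
  have hdetiff : proj φ x ∈ V.map (proj φ) ↔ A.det = 0 := by
    rw [hmem, hspan]
    have h1 : p x ∈ Submodule.span ℝ (Set.range v) ↔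
        ¬ LinearIndependent ℝ (Fin.snoc v (p x) : Fin (r + 1) → _) := by
      rw [linearIndependent_fin_snoc]
      tauto
    rw [h1, ← hAcol]
    change (¬ LinearIndependent ℝ A.col) ↔ _
    rw [linearIndependent_cols_iff_isUnit, Matrix.isUnit_iff_isUnit_det, isUnit_iff_ne_zero, not_not]
  -- identify the minors with Plücker coordinates
  have hminor : ∀ i : Fin (r + 1),
      (A.submatrix i.succAbove (Fin.last r).succAbove).det =
      pluck B (φ.erase (e i))
        (by simp [Finset.card_erase_of_mem (he_mem i), hφ]) := by
    intro i
    have hcard : (φ.erase (e i)).card = r := by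
      simp [Finset.card_erase_of_mem (he_mem i), hφ]
    have hf : ∀ i' : Fin r,
        ((φ.erase (e i)).orderIsoOfFin hcard i' : Fin m) = e (i.succAbove i') := by
      have hsm : StrictMono (fun i' : Fin r => e (i.succAbove i')) :=
        he_strict.comp (Fin.strictMono_succAbove i)
      have hmem' : ∀ i' : Fin r, e (i.succAbove i') ∈ φ.erase (e i) := by
        intro i'
        refine Finset.mem_erase.2 ⟨?_, he_mem _⟩
        intro hcontra
        exact Fin.succAbove_ne i i' (he_strict.injective hcontra)
      have := Finset.orderEmbOfFin_unique hcard hmem' hsm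
      intro i'
      rw [Finset.coe_orderIsoOfFin_apply]
      exact (congrFun this i').symm
    unfold pluck
    congr 1
    ext i' j'
    simp only [submatrix_apply, id_eq, hf]
    simp [hA, Fin.snoc_castSucc, Fin.succAbove_last]
  -- Laplace expansion
  have hdet : A.det = (-1 : ℝ) ^ r *
      ∑ k : Fin (r + 1), (-1 : ℝ) ^ (k : ℕ) * x (e k) *
        pluck B (φ.erase (e k))
          (by simp [Finset.card_erase_of_mem (he_mem k), hφ]) := by
    rw [det_succ_column A (Fin.last r), Finset.mul_sum]
    refine Finset.sum_congr rfl fun i _ => ?_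
    have hAlast : A i (Fin.last r) = x (e i) := by simp [hA, Fin.snoc_last]
    rw [hminor i, hAlast]
    have : ((Fin.last r : Fin (r + 1)) : ℕ) = r := rfl
    rw [this, pow_add]
    ring
  rw [hdetiff, hdet]
  constructor
  · intro h
    have hne : ((-1 : ℝ) ^ r) ≠ 0 := by
      simp
    exact (mul_eq_zero.1 h).resolve_left hne
  · intro h
    rw [h, mul_zero]
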